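/- Let N ≥ 1, let y : Fin N → {0,1}, and let c_L, d : Fin N → ℝ be positive functions. Define B(P, y) := P^{1−y}(1−P)^{y} for P ∈ [0,1] and y ∈ {0,1} (with the convention 0^0 = 1), and for t ∈ {0,1}^N and P ∈ [0,1] define F(t, P) := ∏_{i : t_i = 1} c_{L,i} · ∏_{i : t_i = 0} d_i · B(P, y_i). Let 𝒫 := { T_n / T_d : T_d ∈ {1, …, N}, T_n ∈ {0, …, T_d} } ⊆ [0,1]. Then there exist t* ∈ {0,1}^N and P* ∈ 𝒫 such that F(t*, P*) ≥ F(t, P) for all t ∈ {0,1}^N and all P ∈ [0,1]; that is, the supremum of F over {0,1}^N × [0,1] is attained at a point whose second coordinate lies in the finite set 𝒫. -/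

import Mathlib

open Real

lemma key_pow (a b : ℕ) (P : ℝ) (h0 : 0 ≤ P) (h1 : P ≤ 1) :
    P ^ a * (1 - P) ^ b ≤ ((a : ℝ) / (a + b)) ^ a * (1 - (a : ℝ) / (a + b)) ^ b := by
  rcases Nat.eq_zero_or_pos a with ha | ha
  · subst ha
    simp only [Nat.cast_zero, zero_div, pow_zero, one_mul, sub_zero, one_pow]
    exact pow_le_one₀ (by linarith) (by linarith)
  rcases Nat.eq_zero_or_pos b with hb | hb
  · subst hb
    simp only [Nat.cast_zero, add_zero, pow_zero, mul_one]
    rw [div_self (by positivity)]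
    simpa using pow_le_one₀ h0 h1
  obtain ⟨n, hn⟩ : ∃ n : ℝ, n = (a : ℝ) + b := ⟨_, rfl⟩
  have hnpos : (0:ℝ) < n := by rw [hn]; positivity
  obtain ⟨Q, hQ⟩ : ∃ Q : ℝ, Q = (a : ℝ) / n := ⟨_, rfl⟩
  rw [← hn, ← hQ]
  have hQpos : 0 < Q := by rw [hQ]; positivity
  have hQlt : Q < 1 := by
    rw [hQ, div_lt_one hnpos, hn]
    have : (0:ℝ) < b := by positivity
    linarith
  have h1Q' : 0 < 1 - Q := by linarith
  have hRpos : 0 < Q ^ a * (1 - Q) ^ b := by positivity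
  rcases eq_or_lt_of_le h0 with hP0 | hP0
  · rw [← hP0, zero_pow (by omega)]; simpa using hRpos.le
  rcases eq_or_lt_of_le h1 with hP1 | hP1
  · rw [hP1]; simp only [sub_self, zero_pow (by omega : b ≠ 0), mul_zero]
    exact hRpos.le
  have h1P : 0 < 1 - P := by linarith
  have h2 : 0 ≤ (1 - P) / (1 - Q) := div_nonneg h1P.le h1Q'.le
  have hamgm := Real.geom_mean_le_arith_mean2_weighted
    (w₁ := (a:ℝ)/n) (w₂ := (b:ℝ)/n) (p₁ := P / Q) (p₂ := (1 - P) / (1 - Q))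
    (by positivity) (by positivity) (by positivity) h2
    (by rw [hn]; field_simp)
  have hsum : (a:ℝ)/n * (P / Q) + (b:ℝ)/n * ((1 - P) / (1 - Q)) = 1 := by
    have h1Qb : 1 - Q = (b:ℝ)/n := by rw [hQ, hn]; field_simp; ring
    rw [h1Qb, hQ]
    have hA : (0:ℝ) < a := by positivity
    have hB : (0:ℝ) < b := by positivity
    rw [hn]
    field_simp
    ring
  rw [hsum] at hamgm
  have hpow : ((P / Q) ^ ((a:ℝ)/n) * ((1 - P) / (1 - Q)) ^ ((b:ℝ)/n)) ^ (n : ℝ)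
      = (P / Q) ^ a * ((1 - P) / (1 - Q)) ^ b := by
    rw [Real.mul_rpow (Real.rpow_nonneg (by positivity) _) (Real.rpow_nonneg h2 _),
      ← Real.rpow_natCast (P/Q) a, ← Real.rpow_natCast ((1-P)/(1-Q)) b,
      ← Real.rpow_mul (by positivity), ← Real.rpow_mul h2,
      div_mul_cancel₀ _ hnpos.ne', div_mul_cancel₀ _ hnpos.ne']
  have hle1 : (P / Q) ^ a * ((1 - P) / (1 - Q)) ^ b ≤ 1 := by
    rw [← hpow]
    calc ((P / Q) ^ ((a:ℝ)/n) * ((1 - P) / (1 - Q)) ^ ((b:ℝ)/n)) ^ (n : ℝ)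
        ≤ 1 ^ (n : ℝ) := Real.rpow_le_rpow (by positivity) hamgm hnpos.le
      _ = 1 := Real.one_rpow _
  have heq : (P/Q)^a * ((1-P)/(1-Q))^b = (P^a * (1-P)^b) / (Q^a * (1-Q)^b) := by
    rw [div_pow, div_pow, div_mul_div_comm]
  rw [heq, div_le_one hRpos] at hle1
  exact hle1

/-- Theorem 2 of the paper (attainment part): the joint maximization of the likelihood
`F (t, P) = (∏_{i : t i} cL i) * ∏_{i : ¬ t i} d i * P ^ (1 - y i) * (1 - P) ^ (y i)`
over trust vectors `t ∈ {0,1}^N` and `P ∈ [0,1]` is attained at some `(t*, P*)` with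
`P*` in the finite set `𝒫 = {Tn / Td : 1 ≤ Td ≤ N, 0 ≤ Tn ≤ Td}`. -/
theorem aglrt_max_attained_on_fraction_set
    (N : ℕ) (hN : 1 ≤ N) (y : Fin N → ℕ) (hy : ∀ i, y i ≤ 1)
    (cL d : Fin N → ℝ) (hcL : ∀ i, 0 < cL i) (hd : ∀ i, 0 < d i) :
    ∃ (tstar : Fin N → Bool) (Pstar : ℝ),
      (∃ Tn Td : ℕ, 1 ≤ Td ∧ Td ≤ N ∧ Tn ≤ Td ∧ Pstar = (Tn : ℝ) / (Td : ℝ)) ∧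
      ∀ (t : Fin N → Bool), ∀ P ∈ Set.Icc (0 : ℝ) 1,
        (∏ i ∈ Finset.univ.filter (fun i => t i = true), cL i) *
            ∏ i ∈ Finset.univ.filter (fun i => t i = false),
              (d i * (P ^ (1 - y i) * (1 - P) ^ (y i)))
          ≤ (∏ i ∈ Finset.univ.filter (fun i => tstar i = true), cL i) *
              ∏ i ∈ Finset.univ.filter (fun i => tstar i = false),
                (d i * (Pstar ^ (1 - y i) * (1 - Pstar) ^ (y i))) := by
  classical
  set S : (Fin N → Bool) → Finset (Fin N) :=
    fun t => Finset.univ.filter (fun i => t i = false) with hS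
  set A : (Fin N → Bool) → ℕ := fun t => ∑ i ∈ S t, (1 - y i) with hA
  set B : (Fin N → Bool) → ℕ := fun t => ∑ i ∈ S t, y i with hB
  have hABcard : ∀ t, A t + B t = (S t).card := by
    intro t
    rw [hA, hB]
    simp only
    rw [← Finset.sum_add_distrib]
    have : ∀ i ∈ S t, 1 - y i + y i = 1 := fun i _ => by have := hy i; omega
    rw [Finset.sum_congr rfl this, Finset.sum_const, smul_eq_mul, mul_one]
  have hABle : ∀ t, A t + B t ≤ N := by
    intro t
    rw [hABcard t]
    have h := Finset.card_le_card (Finset.filter_subset (fun i => t i = false) Finset.univ)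
    simpa using h
  set Pf : (Fin N → Bool) → ℝ := fun t => (A t : ℝ) / ((A t : ℝ) + (B t : ℝ)) with hPf
  set F : (Fin N → Bool) → ℝ → ℝ := fun t P =>
    (∏ i ∈ Finset.univ.filter (fun i => t i = true), cL i) *
      ∏ i ∈ S t, (d i * (P ^ (1 - y i) * (1 - P) ^ (y i))) with hF
  have hsplit : ∀ t P, F t P =
      (∏ i ∈ Finset.univ.filter (fun i => t i = true), cL i) *
        ((∏ i ∈ S t, d i) * (P ^ (A t) * (1 - P) ^ (B t))) := by
    intro t P
    rw [hF]
    simp only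
    rw [Finset.prod_mul_distrib, Finset.prod_mul_distrib,
      Finset.prod_pow_eq_pow_sum, Finset.prod_pow_eq_pow_sum]
  have hstep : ∀ t, ∀ P ∈ Set.Icc (0:ℝ) 1, F t P ≤ F t (Pf t) := by
    intro t P hP
    rw [hsplit, hsplit]
    have hkey := key_pow (A t) (B t) P hP.1 hP.2
    have hC : 0 ≤ ∏ i ∈ Finset.univ.filter (fun i => t i = true), cL i :=
      Finset.prod_nonneg (fun i _ => (hcL i).le)
    have hD : 0 ≤ ∏ i ∈ S t, d i := Finset.prod_nonneg (fun i _ => (hd i).le)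
    exact mul_le_mul_of_nonneg_left
      (mul_le_mul_of_nonneg_left hkey hD) hC
  obtain ⟨tstar, -, htstar⟩ := Finset.exists_max_image Finset.univ
    (fun t => F t (Pf t)) ⟨fun _ => true, Finset.mem_univ _⟩
  refine ⟨tstar, Pf tstar, ?_, ?_⟩
  · rcases Nat.eq_zero_or_pos (A tstar + B tstar) with h0 | h0
    · refine ⟨0, 1, le_refl 1, hN, Nat.zero_le 1, ?_⟩
      rw [hPf]
      simp only
      have ha : A tstar = 0 := by omega
      have hb : B tstar = 0 := by omega
      rw [ha, hb]
      norm_num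
    · refine ⟨A tstar, A tstar + B tstar, h0, hABle tstar, Nat.le_add_right _ _, ?_⟩
      rw [hPf]
      push_cast
      ring_nf
  · intro t P hP
    calc (∏ i ∈ Finset.univ.filter (fun i => t i = true), cL i) *
            ∏ i ∈ Finset.univ.filter (fun i => t i = false),
              (d i * (P ^ (1 - y i) * (1 - P) ^ (y i)))
        = F t P := rfl
      _ ≤ F t (Pf t) := hstep t P hP
      _ ≤ F tstar (Pf tstar) := htstar t (Finset.mem_univ t)
      _ = _ := rfl
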